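/- arXiv:1603.07261 — 4 statements merged into one kernel-verified Lean document; each statement's English description precedes it below -/
import Mathlib

section
/- Let 0 < c < 1 and β > 0, and let Δ be the forward difference operator Δf(x) = f(x+1) − f(x). For any polynomial f, [(1 − (c/(1−c))·Δ)^{−β} f](0), defined as the finite sum Σₖ ((β)ₖ/k!)·(c/(1−c))ᵏ·Δᵏf(0), equals (1−c)^β · Σ_{j=0}^∞ ((β)ⱼ·cʲ/j!)·f(j), where the right-hand side series converges absolutely. -/
open Filter Polynomial in
lemma auxSummable' (α x : ℝ) (hx0 : 0 ≤ x) (hx1 : x < 1) (p : ℕ) :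
    Summable (fun j : ℕ => |(ascPochhammer ℝ j).eval α| * x ^ j / (Nat.factorial j) * ((j:ℝ)+1)^p) := by
  set a : ℕ → ℝ := fun j => |(ascPochhammer ℝ j).eval α| * x ^ j / (Nat.factorial j) * ((j:ℝ)+1)^p with ha
  set r : ℝ := (x+1)/2 with hrdef
  have hr1 : r < 1 := by rw [hrdef]; linarith
  have hxr : x < r := by rw [hrdef]; linarith
  apply summable_of_ratio_norm_eventually_le hr1
  set t : ℕ → ℝ := fun j => ((α + j) / ((j:ℝ)+1)) * x * (((j:ℝ)+2)/((j:ℝ)+1))^p with htdef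
  have h1 : Tendsto (fun j : ℕ => (α + j) / ((j:ℝ)+1)) atTop (nhds 1) := by
    have : (fun j : ℕ => (α + j) / ((j:ℝ)+1)) = fun j : ℕ => (α - 1) * (1/((j:ℝ)+1)) + 1 := by
      funext j
      have : ((j:ℝ)+1) ≠ 0 := by positivity
      field_simp
      ring
    rw [this]
    have := tendsto_one_div_add_atTop_nhds_zero_nat (𝕜 := ℝ)
    have h2 := (this.const_mul (α - 1)).add_const 1
    simpa using h2
  have h2 : Tendsto (fun j : ℕ => ((j:ℝ)+2)/((j:ℝ)+1)) atTop (nhds 1) := by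
    have : (fun j : ℕ => ((j:ℝ)+2) / ((j:ℝ)+1)) = fun j : ℕ => 1/((j:ℝ)+1) + 1 := by
      funext j
      have : ((j:ℝ)+1) ≠ 0 := by positivity
      field_simp
      ring
    rw [this]
    simpa using (tendsto_one_div_add_atTop_nhds_zero_nat (𝕜 := ℝ)).add_const 1
  have ht : Tendsto t atTop (nhds x) := by
    have := (h1.mul_const x).mul (h2.pow p)
    simpa using this
  have hev : ∀ᶠ j : ℕ in atTop, t j < r := ht.eventually_lt_const hxr
  have hev2 : ∀ᶠ j : ℕ in atTop, (0:ℝ) ≤ α + j := by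
    filter_upwards [eventually_ge_atTop ⌈-α⌉₊] with j hj
    have h3 : (-α) ≤ (⌈-α⌉₊ : ℝ) := Nat.le_ceil _
    have h4 : ((⌈-α⌉₊ : ℕ) : ℝ) ≤ (j : ℝ) := Nat.cast_le.mpr hj
    linarith
  filter_upwards [hev, hev2] with j hj1 hj2
  have haj : 0 ≤ a j := by positivity
  have hajs : 0 ≤ a (j+1) := by positivity
  rw [Real.norm_eq_abs, Real.norm_eq_abs, abs_of_nonneg haj, abs_of_nonneg hajs]
  have hkey : a (j+1) = t j * a j := by
    have he : (ascPochhammer ℝ (j+1)).eval α = (ascPochhammer ℝ j).eval α * (α + j) := by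
      rw [ascPochhammer_succ_right]
      simp
    have hj1ne : ((j:ℝ)+1) ≠ 0 := by positivity
    have hfacne : ((Nat.factorial j : ℕ) : ℝ) ≠ 0 := by
      exact_mod_cast Nat.factorial_ne_zero j
    rw [ha]
    simp only [he, htdef]
    rw [abs_mul, abs_of_nonneg hj2]
    push_cast [Nat.factorial_succ, pow_succ]
    rw [div_pow]
    field_simp
    ring
  rw [hkey]
  have ht0 : 0 ≤ t j := by
    rw [htdef]
    have : 0 ≤ (α + j) / ((j:ℝ)+1) := by positivity
    positivity
  exact mul_le_mul_of_nonneg_right (le_of_lt hj1) haj |>.trans_eq rfl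


open Polynomial in
lemma fwdDiff_eval_poly (g : Polynomial ℝ) :
    fwdDiff (1:ℝ) (fun x => g.eval x) = fun x => (g.comp (X + C 1) - g).eval x := by
  funext x
  simp [fwdDiff, eval_comp]

open Polynomial in
lemma fwdDiff_iter_eval_poly_zero : ∀ (n : ℕ) (g : Polynomial ℝ), g.natDegree ≤ n →
    (fwdDiff (1:ℝ))^[n+1] (fun x => g.eval x) = fun _ => 0 := by
  intro n
  induction n with
  | zero =>
    intro g hg
    rw [Polynomial.eq_C_of_natDegree_le_zero hg]
    funext x
    simp [fwdDiff]
  | succ n ih =>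
    intro g hg
    rw [Function.iterate_succ_apply, fwdDiff_eval_poly]
    set g' := g.comp (X + C 1) - g with hg'def
    by_cases hg' : g' = 0
    · rw [hg']
      have hz : (fun x : ℝ => (0 : Polynomial ℝ).eval x) = fun _ => (0:ℝ) := by
        funext x; simp
      rw [hz]
      apply Function.iterate_fixed
      funext x; simp [fwdDiff]
    · apply ih
      by_cases hdeg0 : g.natDegree = 0
      · exfalso
        apply hg'
        rw [hg'def, Polynomial.eq_C_of_natDegree_le_zero hdeg0.le]
        simp
      · have hgne : g ≠ 0 := fun h => hdeg0 (by simp [h])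
        have hcompne : g.comp (X + C 1) ≠ 0 := fun h => by
          rw [Polynomial.comp_eq_zero_iff] at h
          rcases h with h | ⟨_, h⟩
          · exact hgne h
          · have h2 : (X + C (1:ℝ)).natDegree = 1 := Polynomial.natDegree_X_add_C 1
            rw [h] at h2
            simp at h2
      -- degree facts
        have hXdeg : (X + C (1:ℝ)).natDegree = 1 := Polynomial.natDegree_X_add_C 1
        have hXlc : (X + C (1:ℝ)).leadingCoeff = 1 := Polynomial.monic_X_add_C 1
        have hdcomp : (g.comp (X + C 1)).degree = g.degree := by
          rw [Polynomial.degree_eq_natDegree hcompne, Polynomial.degree_eq_natDegree hgne,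
            Polynomial.natDegree_comp, hXdeg, mul_one]
        have hlc : (g.comp (X + C 1)).leadingCoeff = g.leadingCoeff := by
          rw [Polynomial.leadingCoeff_comp (by rw [hXdeg]; norm_num), hXlc, one_pow, mul_one]
        have hlt : g'.degree < g.degree := by
          rw [hg'def]
          have := Polynomial.degree_sub_lt hdcomp hcompne hlc
          rwa [hdcomp] at this
        have : g'.natDegree < g.natDegree := Polynomial.natDegree_lt_natDegree hg' hlt
        omega

open Polynomial in
lemma fwdDiff_iter_eval_zero_of_lt (f : Polynomial ℝ) (k : ℕ) (hk : f.natDegree < k) :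
    (fwdDiff (1:ℝ))^[k] (fun x => f.eval x) 0 = 0 := by
  obtain ⟨m, rfl⟩ : ∃ m, k = m + 1 := ⟨k-1, by omega⟩
  rw [fwdDiff_iter_eval_poly_zero m f (by omega)]



open Filter Polynomial Set in
lemma binomial_series_tsum (α x : ℝ) (hx0 : 0 ≤ x) (hx1 : x < 1) :
    ∑' m : ℕ, (ascPochhammer ℝ m).eval α * x ^ m / (Nat.factorial m) = (1 - x) ^ (-α) := by
  set S : ℝ → ℝ := fun y => ∑' m : ℕ, (ascPochhammer ℝ m).eval α * y ^ m / (Nat.factorial m)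
    with hSdef
  set V : ℝ → ℝ := fun y => ∑' n : ℕ, (ascPochhammer ℝ (n+1)).eval α * y ^ n / (Nat.factorial n)
    with hVdef
  have hfne : ∀ n : ℕ, ((Nat.factorial n : ℕ) : ℝ) ≠ 0 := fun n => by
    exact_mod_cast Nat.factorial_ne_zero n
  have habs : ∀ (y : ℝ) (m : ℕ), ‖(ascPochhammer ℝ m).eval α * y ^ m / (Nat.factorial m)‖
      = |(ascPochhammer ℝ m).eval α| * |y| ^ m / (Nat.factorial m) := by
    intro y m
    rw [Real.norm_eq_abs, abs_div, abs_mul, abs_pow, Nat.abs_cast]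
  have hsumS : ∀ y : ℝ, |y| < 1 →
      Summable (fun m : ℕ => (ascPochhammer ℝ m).eval α * y ^ m / (Nat.factorial m)) := by
    intro y hy
    apply Summable.of_norm_bounded ((auxSummable' α |y| (abs_nonneg y) hy 0).congr ?_)
    · intro m
      rw [habs]
    · intro m
      rw [pow_zero, mul_one]
  have hsuccEval : ∀ (n : ℕ), (ascPochhammer ℝ (n+1)).eval α
      = (ascPochhammer ℝ n).eval α * (α + n) := by
    intro n
    rw [ascPochhammer_succ_right]
    simp
  have hsumV : ∀ y : ℝ, |y| < 1 →
      Summable (fun n : ℕ => (ascPochhammer ℝ (n+1)).eval α * y ^ n / (Nat.factorial n)) := by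
    intro y hy
    apply Summable.of_norm_bounded (g := fun n : ℕ => (|α|+1) * (|(ascPochhammer ℝ n).eval α| * |y| ^ n / (Nat.factorial n) * ((n:ℝ)+1)^1))
      ((auxSummable' α |y| (abs_nonneg y) hy 1).mul_left _)
    intro n
    rw [Real.norm_eq_abs, abs_div, abs_mul, abs_pow, Nat.abs_cast, hsuccEval, abs_mul]
    have h1 : |α + (n:ℝ)| ≤ (|α|+1) * ((n:ℝ)+1) := by
      have h0 := abs_add_le α (n:ℝ)
      have h2 : |(n:ℝ)| = (n:ℝ) := abs_of_nonneg (Nat.cast_nonneg n)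
      have h3 : (0:ℝ) ≤ |α| := abs_nonneg α
      have h4 : (0:ℝ) ≤ (n:ℝ) := Nat.cast_nonneg n
      nlinarith
    have hn : (0:ℝ) ≤ |(ascPochhammer ℝ n).eval α| * |y|^n / (Nat.factorial n) := by positivity
    calc |(ascPochhammer ℝ n).eval α| * |α + n| * |y| ^ n / (Nat.factorial n)
        = (|(ascPochhammer ℝ n).eval α| * |y| ^ n / (Nat.factorial n)) * |α + n| := by ring
      _ ≤ (|(ascPochhammer ℝ n).eval α| * |y| ^ n / (Nat.factorial n)) * ((|α|+1) * ((n:ℝ)+1)) :=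
          mul_le_mul_of_nonneg_left h1 hn
      _ = (|α|+1) * (|(ascPochhammer ℝ n).eval α| * |y| ^ n / (Nat.factorial n) * ((n:ℝ)+1)^1) := by
          ring
  have hsumW : ∀ y : ℝ, |y| < 1 →
      Summable (fun n : ℕ => (n:ℝ) * ((ascPochhammer ℝ n).eval α * y ^ n / (Nat.factorial n))) := by
    intro y hy
    apply Summable.of_norm_bounded (g := fun n : ℕ => |(ascPochhammer ℝ n).eval α| * |y| ^ n / (Nat.factorial n) * ((n:ℝ)+1)^1)
      (auxSummable' α |y| (abs_nonneg y) hy 1)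
    intro n
    rw [Real.norm_eq_abs, abs_mul, Nat.abs_cast, abs_div, abs_mul, abs_pow, Nat.abs_cast, pow_one]
    have hn : (0:ℝ) ≤ |(ascPochhammer ℝ n).eval α| * |y|^n / (Nat.factorial n) := by positivity
    calc (n:ℝ) * (|(ascPochhammer ℝ n).eval α| * |y| ^ n / (Nat.factorial n))
        ≤ ((n:ℝ)+1) * (|(ascPochhammer ℝ n).eval α| * |y| ^ n / (Nat.factorial n)) := by
          apply mul_le_mul_of_nonneg_right (by linarith) hn
      _ = |(ascPochhammer ℝ n).eval α| * |y| ^ n / (Nat.factorial n) * ((n:ℝ)+1) := by ring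
  -- derivative of S
  have hS : ∀ y ∈ Ioo (-1:ℝ) 1, HasDerivAt S (V y) y := by
    intro y hy
    have hy1 : |y| < 1 := abs_lt.mpr ⟨hy.1, hy.2⟩
    have hy0 := abs_nonneg y
    set r : ℝ := (|y|+1)/2 with hrdef
    have hr0 : 0 < r := by rw [hrdef]; linarith
    have hr1 : r < 1 := by rw [hrdef]; linarith
    have hyr : |y| < r := by rw [hrdef]; linarith
    have hu : Summable (fun n : ℕ =>
        |(ascPochhammer ℝ n).eval α| * ((n:ℝ) * r^(n-1)) / (Nat.factorial n)) := by
      refine Summable.of_nonneg_of_le (fun n => by positivity) (fun n => ?_)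
        ((auxSummable' α r (le_of_lt hr0) hr1 1).mul_right r⁻¹)
      match n with
      | 0 => simp; positivity
      | (m+1) =>
        have h1 : r ^ (m+1-1) = r ^ (m+1) * r⁻¹ := by
          rw [Nat.add_sub_cancel, pow_succ, mul_assoc, mul_inv_cancel₀ (ne_of_gt hr0), mul_one]
        rw [h1, pow_one]
        have h2 : (0:ℝ) < r⁻¹ := by positivity
        have h3 : ((m:ℝ)+1) ≤ ((m+1:ℕ):ℝ)+1 := by push_cast; linarith
        calc |(ascPochhammer ℝ (m+1)).eval α| * (((m+1:ℕ):ℝ) * (r ^ (m+1) * r⁻¹)) / (Nat.factorial (m+1))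
            = (|(ascPochhammer ℝ (m+1)).eval α| * r ^ (m+1) / (Nat.factorial (m+1)) * ((m+1:ℕ):ℝ)) * r⁻¹ := by
              ring
          _ ≤ (|(ascPochhammer ℝ (m+1)).eval α| * r ^ (m+1) / (Nat.factorial (m+1)) * (((m+1:ℕ):ℝ)+1)) * r⁻¹ := by
              have hnn : (0:ℝ) ≤ |(ascPochhammer ℝ (m+1)).eval α| * r ^ (m+1) / (Nat.factorial (m+1)) := by
                positivity
              have h7 : ((m+1:ℕ):ℝ) ≤ ((m+1:ℕ):ℝ)+1 := by linarith
              exact mul_le_mul_of_nonneg_right (mul_le_mul_of_nonneg_left h7 hnn) (le_of_lt h2)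
    have hderiv : ∀ (n : ℕ) (z : ℝ), z ∈ Ioo (-r) r →
        HasDerivAt (fun w : ℝ => (ascPochhammer ℝ n).eval α * w ^ n / (Nat.factorial n))
          ((ascPochhammer ℝ n).eval α * ((n:ℝ) * z ^ (n-1)) / (Nat.factorial n)) z := by
      intro n z _
      simpa using ((hasDerivAt_pow n z).const_mul ((ascPochhammer ℝ n).eval α)).div_const
        ((Nat.factorial n : ℝ))
    have hbound : ∀ (n : ℕ) (z : ℝ), z ∈ Ioo (-r) r →
        ‖(ascPochhammer ℝ n).eval α * ((n:ℝ) * z ^ (n-1)) / (Nat.factorial n)‖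
          ≤ |(ascPochhammer ℝ n).eval α| * ((n:ℝ) * r^(n-1)) / (Nat.factorial n) := by
      intro n z hz
      have hzr : |z| ≤ r := le_of_lt (abs_lt.mpr ⟨hz.1, hz.2⟩)
      rw [Real.norm_eq_abs, abs_div, abs_mul, abs_mul, Nat.abs_cast, Nat.abs_cast, abs_pow]
      gcongr
    have key := hasDerivAt_tsum_of_isPreconnected hu isOpen_Ioo (convex_Ioo (-r) r).isPreconnected
      hderiv hbound (mem_Ioo.mpr ⟨by linarith, hr0⟩)
      (hsumS 0 (by simp)) (mem_Ioo.mpr (abs_lt.mp hyr))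
    have hg'sum : Summable (fun n : ℕ =>
        (ascPochhammer ℝ n).eval α * ((n:ℝ) * y ^ (n-1)) / (Nat.factorial n)) :=
      Summable.of_norm_bounded hu (fun n => hbound n y (mem_Ioo.mpr (abs_lt.mp hyr)))
    have heq : (∑' n : ℕ, (ascPochhammer ℝ n).eval α * ((n:ℝ) * y ^ (n-1)) / (Nat.factorial n))
        = V y := by
      rw [Summable.tsum_eq_zero_add hg'sum]
      simp only [Nat.cast_zero, zero_mul, mul_zero, zero_div, zero_add]
      rw [hVdef]
      apply tsum_congr
      intro n
      rw [Nat.add_sub_cancel, Nat.factorial_succ]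
      have h1 : ((n:ℝ)+1) ≠ 0 := by positivity
      push_cast
      field_simp
    rw [← heq]
    exact key
  -- functional equation
  have hrel : ∀ y : ℝ, |y| < 1 → (1 - y) * V y = α * S y := by
    intro y hy
    have hW := hsumW y hy
    have hV := hsumV y hy
    have hyV : y * V y = ∑' n : ℕ, (n:ℝ) * ((ascPochhammer ℝ n).eval α * y^n / (Nat.factorial n)) := by
      rw [Summable.tsum_eq_zero_add hW]
      simp only [Nat.cast_zero, zero_mul, zero_add]
      rw [hVdef, ← tsum_mul_left]
      apply tsum_congr
      intro n
      rw [Nat.factorial_succ]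
      have h1 : ((n:ℝ)+1) ≠ 0 := by positivity
      push_cast
      field_simp
      ring
    have h2 : (1-y) * V y = V y - y * V y := by ring
    rw [h2, hyV, hVdef]
    simp only []
    rw [← Summable.tsum_sub hV hW]
    have h3 : ∀ n : ℕ, (ascPochhammer ℝ (n+1)).eval α * y ^ n / (Nat.factorial n)
        - (n:ℝ) * ((ascPochhammer ℝ n).eval α * y ^ n / (Nat.factorial n))
        = α * ((ascPochhammer ℝ n).eval α * y ^ n / (Nat.factorial n)) := by
      intro n
      rw [hsuccEval]
      ring
    rw [tsum_congr h3, tsum_mul_left]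
  -- value at 0
  have hS0 : S 0 = 1 := by
    rw [hSdef]
    simp only []
    rw [tsum_eq_single 0]
    · simp
    · intro b hb
      simp [zero_pow hb]
  -- ODE / constancy
  have hd : ∀ y ∈ Ioo (-1:ℝ) 1, HasDerivAt (fun z => (1-z)^α * S z) 0 y := by
    intro y hy
    have h1y : (0:ℝ) < 1 - y := by linarith [hy.2]
    have hmono : HasDerivAt (fun z : ℝ => 1 - z) (-1) y := by
      simpa using (hasDerivAt_id y).const_sub 1
    have hrpow : HasDerivAt (fun z : ℝ => (1-z)^α) (α * (1-y)^(α-1) * (-1)) y := by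
      have h2 := Real.hasDerivAt_rpow_const (x := 1-y) (p := α) (Or.inl (ne_of_gt h1y))
      exact h2.comp y hmono
    have h3 := hrpow.mul (hS y hy)
    have h4 : α * (1-y)^(α-1) * (-1) * S y + (1-y)^α * V y = 0 := by
      have hpow : (1-y)^α = (1-y)^(α-1) * (1-y) := by
        conv_lhs => rw [show α = (α-1)+1 by ring]
        rw [Real.rpow_add h1y, Real.rpow_one]
      rw [hpow]
      have h5 := hrel y (abs_lt.mpr ⟨hy.1, hy.2⟩)
      linear_combination ((1:ℝ)-y)^(α-1) * h5
    rw [h4] at h3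
    exact h3
  have hIcc : Icc (0:ℝ) x ⊆ Ioo (-1:ℝ) 1 := by
    intro z hz
    exact ⟨by linarith [hz.1], by linarith [hz.2]⟩
  have hcont : ContinuousOn (fun z => (1-z)^α * S z) (Icc 0 x) :=
    fun z hz => ((hd z (hIcc hz)).continuousAt).continuousWithinAt
  have hder : ∀ z ∈ Ico (0:ℝ) x, HasDerivWithinAt (fun z => (1-z)^α * S z) 0 (Ici z) z :=
    fun z hz => ((hd z (hIcc (Ico_subset_Icc_self hz))).hasDerivWithinAt)
  have hconst := constant_of_has_deriv_right_zero hcont hder x (right_mem_Icc.mpr hx0)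
  have h5 : (1-x)^α * S x = 1 := by
    rw [hconst]
    simp [hS0]
  have h6 : (0:ℝ) < (1-x)^α := Real.rpow_pos_of_pos (by linarith) α
  have h7 : S x = ((1-x)^α)⁻¹ :=
    mul_left_cancel₀ (ne_of_gt h6) (by rw [h5, mul_inv_cancel₀ (ne_of_gt h6)])
  rw [Real.rpow_neg (by linarith : (0:ℝ) ≤ 1 - x)]
  exact h7





open Polynomial in
/-- for `0 < c < 1`, `β > 0` and a polynomial `f`,
`Σₖ (β)ₖ/k! (c/(1−c))ᵏ Δᵏf(0) = (1−c)^β Σⱼ (β)ⱼ cʲ/j! f(j)`,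
the right-hand series converging absolutely. -/
theorem meixner_functional_newton_series
    (c β : ℝ) (hc0 : 0 < c) (hc1 : c < 1) (hβ : 0 < β) (f : Polynomial ℝ) :
    (∑ k ∈ Finset.range (f.natDegree + 1),
        (ascPochhammer ℝ k).eval β / (Nat.factorial k) * (c / (1-c))^k
          * (fwdDiff (1:ℝ))^[k] (fun x => f.eval x) 0)
      = (1-c) ^ β *
          ∑' j : ℕ, (ascPochhammer ℝ j).eval β * c^j / (Nat.factorial j)
            * f.eval (j:ℝ) ∧
    Summable (fun j : ℕ =>
      |(ascPochhammer ℝ j).eval β * c^j / (Nat.factorial j) * f.eval (j:ℝ)|) := by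
  have hc1' : (0:ℝ) < 1 - c := by linarith
  set N := f.natDegree with hN
  set D : ℕ → ℝ := fun k => (fwdDiff (1:ℝ))^[k] (fun x => f.eval x) 0 with hD
  have hfne : ∀ n : ℕ, ((Nat.factorial n : ℕ) : ℝ) ≠ 0 := fun n => by
    exact_mod_cast Nat.factorial_ne_zero n
  -- Newton's forward formula
  have newton : ∀ j : ℕ, f.eval (j:ℝ)
      = ∑ k ∈ Finset.range (N+1), (j.choose k : ℝ) * D k := by
    intro j
    have h1 := shift_eq_sum_fwdDiff_iter (1:ℝ) (fun x => f.eval x) j 0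
    have h2 : (0:ℝ) + j • (1:ℝ) = (j:ℝ) := by
      rw [nsmul_eq_mul, mul_one, zero_add]
    rw [h2] at h1
    have h3 : ∀ k, (j.choose k) • ((fwdDiff (1:ℝ))^[k] (fun x => f.eval x) 0)
        = (j.choose k : ℝ) * D k := fun k => by rw [nsmul_eq_mul, hD]
    simp only [h3] at h1
    rw [h1]
    -- extend both sums to range (max j N + 1)
    have hsub1 : Finset.range (j+1) ⊆ Finset.range (max j N + 1) := by
      apply Finset.range_subset_range.mpr; omega
    have hsub2 : Finset.range (N+1) ⊆ Finset.range (max j N + 1) := by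
      apply Finset.range_subset_range.mpr; omega
    rw [Finset.sum_subset hsub1, Finset.sum_subset hsub2]
    · intro k hk hk2
      simp only [Finset.mem_range] at hk hk2
      have hNk : N < k := by omega
      have hzero : D k = 0 := fwdDiff_iter_eval_zero_of_lt f k hNk
      rw [hzero, mul_zero]
    · intro k hk hk2
      simp only [Finset.mem_range] at hk hk2
      have : j < k := by omega
      rw [Nat.choose_eq_zero_of_lt this]
      simp
  -- polynomial growth bound
  set C : ℝ := ∑ i ∈ Finset.range (N+1), |f.coeff i| with hC
  have hfb : ∀ j : ℕ, |f.eval (j:ℝ)| ≤ C * ((j:ℝ)+1)^N := by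
    intro j
    have h0 : f.eval (j:ℝ) = ∑ i ∈ Finset.range (N+1), f.coeff i * (j:ℝ)^i := by
      rw [eval_eq_sum_range]
    rw [h0]
    calc |∑ i ∈ Finset.range (N+1), f.coeff i * (j:ℝ)^i|
        ≤ ∑ i ∈ Finset.range (N+1), |f.coeff i * (j:ℝ)^i| := Finset.abs_sum_le_sum_abs _ _
      _ ≤ ∑ i ∈ Finset.range (N+1), |f.coeff i| * ((j:ℝ)+1)^N := by
          apply Finset.sum_le_sum
          intro i hi
          rw [abs_mul, abs_pow, Nat.abs_cast]
          apply mul_le_mul_of_nonneg_left _ (abs_nonneg _)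
          calc (j:ℝ)^i ≤ ((j:ℝ)+1)^i := by
                apply pow_le_pow_left₀ (Nat.cast_nonneg j)
                linarith
            _ ≤ ((j:ℝ)+1)^N := by
                apply pow_le_pow_right₀ (by linarith [Nat.cast_nonneg (α := ℝ) j])
                simp only [Finset.mem_range] at hi; omega
      _ = C * ((j:ℝ)+1)^N := by rw [hC, Finset.sum_mul]
  -- summability of the main series (absolute values)
  have hpos : ∀ j : ℕ, (0:ℝ) < (ascPochhammer ℝ j).eval β → True := fun _ _ => trivial
  have hSummAbs : Summable (fun j : ℕ =>
      |(ascPochhammer ℝ j).eval β * c^j / (Nat.factorial j) * f.eval (j:ℝ)|) := by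
    refine Summable.of_nonneg_of_le (fun j => abs_nonneg _) (fun j => ?_)
      ((auxSummable' β c hc0.le hc1 N).mul_left C)
    rw [abs_mul, abs_div, abs_mul, abs_pow, Nat.abs_cast, abs_of_pos hc0]
    calc |(ascPochhammer ℝ j).eval β| * c^j / (Nat.factorial j) * |f.eval (j:ℝ)|
        ≤ |(ascPochhammer ℝ j).eval β| * c^j / (Nat.factorial j) * (C * ((j:ℝ)+1)^N) := by
          apply mul_le_mul_of_nonneg_left (hfb j) (by positivity)
      _ = C * (|(ascPochhammer ℝ j).eval β| * c^j / (Nat.factorial j) * ((j:ℝ)+1)^N) := by ring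
  refine ⟨?_, hSummAbs⟩
  -- summability of the choose-weighted series
  have hbk : ∀ k : ℕ, Summable (fun j : ℕ =>
      (ascPochhammer ℝ j).eval β * c^j / (Nat.factorial j) * (j.choose k : ℝ)) := by
    intro k
    refine Summable.of_norm_bounded (auxSummable' β c hc0.le hc1 k) (fun j => ?_)
    rw [Real.norm_eq_abs, abs_mul, abs_div, abs_mul, abs_pow, Nat.abs_cast, abs_of_pos hc0,
      Nat.abs_cast]
    apply mul_le_mul_of_nonneg_left _ (by positivity)
    calc (j.choose k : ℝ) ≤ ((j^k : ℕ) : ℝ) := Nat.cast_le.mpr (Nat.choose_le_pow j k)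
      _ = (j:ℝ)^k := by push_cast; ring
      _ ≤ ((j:ℝ)+1)^k := by
          apply pow_le_pow_left₀ (Nat.cast_nonneg j)
          linarith
  -- the inner sums
  have hT : ∀ k : ℕ, (∑' j : ℕ, (ascPochhammer ℝ j).eval β * c^j / (Nat.factorial j) * (j.choose k : ℝ))
      = (ascPochhammer ℝ k).eval β * c^k / (Nat.factorial k) * (1-c) ^ (-(β + (k:ℝ))) := by
    intro k
    have hinj : Function.Injective (fun m : ℕ => m + k) := add_left_injective k
    have hsupp : Function.support (fun j : ℕ =>
        (ascPochhammer ℝ j).eval β * c^j / (Nat.factorial j) * (j.choose k : ℝ))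
        ⊆ Set.range (fun m : ℕ => m + k) := by
      intro j hj
      simp only [Function.mem_support] at hj
      rcases Nat.lt_or_ge j k with hjk | hjk
      · exfalso
        apply hj
        rw [Nat.choose_eq_zero_of_lt hjk]
        simp
      · exact ⟨j - k, show j - k + k = j by omega⟩
    have hterm : ∀ m : ℕ, (ascPochhammer ℝ (m+k)).eval β * c^(m+k) / (Nat.factorial (m+k))
          * (((m+k).choose k : ℕ) : ℝ)
        = ((ascPochhammer ℝ k).eval β * c^k / (Nat.factorial k))
          * ((ascPochhammer ℝ m).eval (β + k) * c^m / (Nat.factorial m)) := by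
      intro m
      have hev : (ascPochhammer ℝ (m+k)).eval β
          = (ascPochhammer ℝ k).eval β * (ascPochhammer ℝ m).eval (β + k) := by
        have h1 := ascPochhammer_mul (S := ℝ) k m
        have h2 := congrArg (Polynomial.eval β) h1
        rw [eval_mul, eval_comp] at h2
        simp only [eval_add, eval_X, eval_natCast] at h2
        rw [Nat.add_comm m k]
        exact h2.symm
      have hfac : (((m+k).choose k : ℕ) : ℝ) * (Nat.factorial k) * (Nat.factorial m)
          = ((Nat.factorial (m+k) : ℕ) : ℝ) := by
        have h1 := Nat.choose_mul_factorial_mul_factorial (Nat.le_add_left k m)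
        rw [Nat.add_sub_cancel] at h1
        exact_mod_cast h1
      rw [hev, pow_add, ← hfac]
      have hch : (0:ℝ) < (((m+k).choose k : ℕ) : ℝ) := by
        exact_mod_cast Nat.choose_pos (Nat.le_add_left k m)
      field_simp
    calc (∑' j : ℕ, (ascPochhammer ℝ j).eval β * c^j / (Nat.factorial j) * (j.choose k : ℝ))
        = ∑' m : ℕ, (ascPochhammer ℝ (m+k)).eval β * c^(m+k) / (Nat.factorial (m+k))
            * (((m+k).choose k : ℕ) : ℝ) := (hinj.tsum_eq hsupp).symm
      _ = ∑' m : ℕ, ((ascPochhammer ℝ k).eval β * c^k / (Nat.factorial k))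
            * ((ascPochhammer ℝ m).eval (β + k) * c^m / (Nat.factorial m)) := tsum_congr hterm
      _ = ((ascPochhammer ℝ k).eval β * c^k / (Nat.factorial k))
            * ∑' m : ℕ, (ascPochhammer ℝ m).eval (β + k) * c^m / (Nat.factorial m) := tsum_mul_left
      _ = (ascPochhammer ℝ k).eval β * c^k / (Nat.factorial k) * (1-c) ^ (-(β + (k:ℝ))) := by
          rw [binomial_series_tsum (β + k) c hc0.le hc1]
  -- expand the tsum using Newton's formula
  have hexp : (∑' j : ℕ, (ascPochhammer ℝ j).eval β * c^j / (Nat.factorial j) * f.eval (j:ℝ))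
      = ∑ k ∈ Finset.range (N+1),
          (∑' j : ℕ, (ascPochhammer ℝ j).eval β * c^j / (Nat.factorial j) * (j.choose k : ℝ)) * D k := by
    have h1 : ∀ j : ℕ, (ascPochhammer ℝ j).eval β * c^j / (Nat.factorial j) * f.eval (j:ℝ)
        = ∑ k ∈ Finset.range (N+1),
            ((ascPochhammer ℝ j).eval β * c^j / (Nat.factorial j) * (j.choose k : ℝ)) * D k := by
      intro j
      rw [newton j, Finset.mul_sum]
      apply Finset.sum_congr rfl
      intro k _
      ring
    rw [tsum_congr h1, Summable.tsum_finsetSum (fun k _ => (hbk k).mul_right (D k))]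
    apply Finset.sum_congr rfl
    intro k _
    rw [tsum_mul_right]
  rw [hexp, Finset.mul_sum]
  apply Finset.sum_congr rfl
  intro k _
  rw [hT k]
  -- final power juggling
  have h1 : (1-c) ^ β * (1-c) ^ (-(β + (k:ℝ))) = ((1-c)^(k:ℕ))⁻¹ := by
    rw [← Real.rpow_add hc1']
    have h2 : β + -(β + (k:ℝ)) = -(k:ℝ) := by ring
    rw [h2, Real.rpow_neg hc1'.le, Real.rpow_natCast]
  calc (ascPochhammer ℝ k).eval β / (Nat.factorial k) * (c/(1-c))^k * D k
      = (ascPochhammer ℝ k).eval β * c^k / (Nat.factorial k) * ((1-c)^(k:ℕ))⁻¹ * D k := by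
        rw [div_pow]
        ring
    _ = (1-c) ^ β * ((ascPochhammer ℝ k).eval β * c^k / (Nat.factorial k)
          * (1-c) ^ (-(β + (k:ℝ))) * D k) := by
        rw [← h1]
        ring
end

section
/- Let H(t) = ((c−1)/(2c))·[(t²−2t)/(1−t)²] with c ∉ {0,1}. Then as formal power series, 1 + H(t)·(2c/(c−1)) reproduces (t²−2t)/(1−t)², and the series G(x,t) = (1−t)^{−β}(1 + ((c−1)/(2c))·(t²−2t)/(1−t)²)^x satisfies σ(t)·∂G/∂t − γ(t)·G = x·G, where σ(t) = −(c/(c−1))(1−t)[(1−t)² + ((c−1)/(2c))((1−t)²−1)] and γ(t) = −(βc/(c−1))[(1−t)² + ((c−1)/(2c))((1−t)²−1)]. -/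
/-- analytic form: with `H(t) = ((c−1)/(2c))(t²−2t)/(1−t)²`,
`1 + H(t)·(2c/(c−1))` reproduces `(t²−2t)/(1−t)²` (up to the constant 1), and
`G(x,t) = (1−t)^(−β)(1 + ((c−1)/(2c))(t²−2t)/(1−t)²)^x` satisfies
`σ(t) ∂G/∂t − γ(t) G = x G` with
`σ(t) = −(c/(c−1))(1−t)[(1−t)² + ((c−1)/(2c))((1−t)²−1)]` and
`γ(t) = −(βc/(c−1))[(1−t)² + ((c−1)/(2c))((1−t)²−1)]`. -/
theorem meixner_type_functional_equation
    (c β x t : ℝ) (hc0 : c ≠ 0) (hc1 : c ≠ 1) (ht : |t| < 1)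
    (ht2 : 0 < 1 + ((c-1)/(2*c)) * ((t^2 - 2*t)/(1-t)^2)) :
    ((c-1)/(2*c)) * ((t^2 - 2*t)/(1-t)^2) * (2*c/(c-1)) = (t^2 - 2*t)/(1-t)^2 ∧
    (-(c/(c-1)) * (1-t) * ((1-t)^2 + ((c-1)/(2*c)) * ((1-t)^2 - 1))) *
        deriv (fun u : ℝ =>
          (1-u) ^ (-β) * (1 + ((c-1)/(2*c)) * ((u^2 - 2*u)/(1-u)^2)) ^ x) t
      - (-(β*c/(c-1)) * ((1-t)^2 + ((c-1)/(2*c)) * ((1-t)^2 - 1))) *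
          ((1-t) ^ (-β) * (1 + ((c-1)/(2*c)) * ((t^2 - 2*t)/(1-t)^2)) ^ x)
      = x * ((1-t) ^ (-β) * (1 + ((c-1)/(2*c)) * ((t^2 - 2*t)/(1-t)^2)) ^ x) := by
  have habs := abs_lt.mp ht
  have h1t : (0:ℝ) < 1 - t := by linarith [habs.2]
  have h1t' : (1:ℝ) - t ≠ 0 := ne_of_gt h1t
  have hc1' : c - 1 ≠ 0 := sub_ne_zero.mpr hc1
  have h2c : (2:ℝ)*c ≠ 0 := by
    simp [hc0]
  constructor
  · field_simp
  set P : ℝ := 1 + ((c-1)/(2*c)) * ((t^2 - 2*t)/(1-t)^2) with hPdef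
  have hP : 0 < P := ht2
  have hP' : P ≠ 0 := ne_of_gt hP
  have hs : HasDerivAt (fun u : ℝ => 1 - u) (-1) t := by
    simpa using (hasDerivAt_id t).const_sub 1
  -- derivative of the inner rational function
  have hq : HasDerivAt (fun u : ℝ => (u^2 - 2*u)/(1-u)^2) (-2/(1-t)^3) t := by
    have hn : HasDerivAt (fun u : ℝ => u^2 - 2*u) (2*t - 2) t := by
      refine ((hasDerivAt_pow 2 t).sub ((hasDerivAt_id' t).const_mul 2)).congr_deriv ?_
      push_cast
      ring
    have hd : HasDerivAt (fun u : ℝ => (1-u)^2) (((2:ℕ):ℝ) * (1-t)^(2-1) * (-1)) t := hs.pow 2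
    have hden : (1-t)^2 ≠ 0 := pow_ne_zero 2 h1t'
    have := hn.div hd hden
    refine this.congr_deriv ?_
    push_cast
    field_simp
    ring
  have hg : HasDerivAt (fun u : ℝ => 1 + ((c-1)/(2*c)) * ((u^2 - 2*u)/(1-u)^2))
      (((c-1)/(2*c)) * (-2/(1-t)^3)) t := (hq.const_mul _).const_add 1
  have h2 : HasDerivAt (fun u : ℝ => (1 + ((c-1)/(2*c)) * ((u^2 - 2*u)/(1-u)^2)) ^ x)
      ((((c-1)/(2*c)) * (-2/(1-t)^3)) * x * P ^ (x-1)) t := hg.rpow_const (Or.inl hP')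
  have h1 : HasDerivAt (fun u : ℝ => (1-u) ^ (-β)) ((-1) * (-β) * (1-t) ^ (-β-1)) t :=
    hs.rpow_const (Or.inl h1t')
  have hprod : HasDerivAt (fun u : ℝ =>
      (1-u) ^ (-β) * (1 + ((c-1)/(2*c)) * ((u^2 - 2*u)/(1-u)^2)) ^ x)
      (((-1) * (-β) * (1-t) ^ (-β-1)) * P ^ x +
        (1-t) ^ (-β) * ((((c-1)/(2*c)) * (-2/(1-t)^3)) * x * P ^ (x-1))) t := h1.mul h2
  rw [hprod.deriv]
  have hA : (1-t) ^ (-β-1) = (1-t) ^ (-β) / (1-t) := by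
    rw [Real.rpow_sub h1t, Real.rpow_one]
  have hB : P ^ (x-1) = P ^ x / P := by
    rw [Real.rpow_sub hP, Real.rpow_one]
  have hAP : (1-t)^2 + ((c-1)/(2*c)) * ((1-t)^2 - 1) = P * (1-t)^2 := by
    rw [hPdef]
    field_simp
    ring
  rw [hA, hB, hAP]
  field_simp
  ring
end

section
/- Let f be a polynomial and α > −1. Define Ψ_{α,f}(x) = (x^α/Γ(α+1))·Σ_{k} (f^{(k)}(0)/(k!·((α+2)/2)ₖ))·(x²/2)ᵏ (a finite sum). Then ∫₀^∞ Ψ_{α,f}(x)·e^{−x} dx = Σₖ (((α+1)/2)ₖ·2ᵏ/k!)·f^{(k)}(0). -/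
open Polynomial MeasureTheory

lemma asc_pos (n : ℕ) {x : ℝ} (hx : 0 < x) : 0 < (ascPochhammer ℝ n).eval x := by
  induction n with
  | zero => simp
  | succ n ih =>
    rw [ascPochhammer_succ_eval]
    exact mul_pos ih (by positivity)

lemma gamma_shift (n : ℕ) {x : ℝ} (hx : 0 < x) :
    Real.Gamma (x + n) = (ascPochhammer ℝ n).eval x * Real.Gamma x := by
  induction n with
  | zero => simp
  | succ n ih =>
    have h : x + (n+1 : ℕ) = (x + n) + 1 := by push_cast; ring
    rw [h, Real.Gamma_add_one (by positivity), ih, ascPochhammer_succ_eval]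
    ring

lemma asc_dup (k : ℕ) (x : ℝ) :
    (ascPochhammer ℝ (2*k)).eval x
      = 4^k * (ascPochhammer ℝ k).eval (x/2) * (ascPochhammer ℝ k).eval ((x+1)/2) := by
  induction k with
  | zero => simp
  | succ k ih =>
    have h : 2*(k+1) = (2*k+1)+1 := by ring
    rw [h, ascPochhammer_succ_eval, ascPochhammer_succ_eval, ih,
      ascPochhammer_succ_eval, ascPochhammer_succ_eval]
    push_cast
    ring

lemma term_ptwise (α : ℝ) (hα : -1 < α) (k : ℕ) (c : ℝ) :
    ∀ x ∈ Set.Ioi (0:ℝ),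
      (x ^ α / Real.Gamma (α+1)
        * (c / ((Nat.factorial k) * (ascPochhammer ℝ k).eval ((α+2)/2)) * (x^2/2)^k))
        * Real.exp (-x)
      = (c / (Real.Gamma (α+1) * (Nat.factorial k) *
          (ascPochhammer ℝ k).eval ((α+2)/2) * 2^k))
        * (Real.exp (-x) * x ^ (α + 2*(k:ℝ) + 1 - 1)) := by
  intro x hx
  have hx0 : (0:ℝ) < x := hx
  have hΓ : 0 < Real.Gamma (α+1) := Real.Gamma_pos_of_pos (by linarith)
  have hP : 0 < (ascPochhammer ℝ k).eval ((α+2)/2) := asc_pos k (by linarith)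
  have hk : (Nat.factorial k : ℝ) ≠ 0 := by positivity
  rw [add_sub_cancel_right, div_pow, ← pow_mul, ← Real.rpow_natCast x (2*k),
    show ((2*k : ℕ) : ℝ) = 2*(k:ℝ) by push_cast; ring, Real.rpow_add hx0]
  field_simp

lemma term_aux (α : ℝ) (hα : -1 < α) (k : ℕ) (c : ℝ) :
    (∫ x in Set.Ioi (0:ℝ),
      (x ^ α / Real.Gamma (α+1)
        * (c / ((Nat.factorial k) * (ascPochhammer ℝ k).eval ((α+2)/2)) * (x^2/2)^k))
        * Real.exp (-x))
      = (ascPochhammer ℝ k).eval ((α+1)/2) * 2^k / (Nat.factorial k) * c := by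
  have hΓ : 0 < Real.Gamma (α+1) := Real.Gamma_pos_of_pos (by linarith)
  have hP : 0 < (ascPochhammer ℝ k).eval ((α+2)/2) := asc_pos k (by linarith)
  have hk2 : (0:ℝ) ≤ 2*(k:ℝ) := by positivity
  have hs : (0:ℝ) < α + 2*(k:ℝ) + 1 := by linarith
  rw [setIntegral_congr_fun measurableSet_Ioi (term_ptwise α hα k c),
    integral_const_mul, ← Real.Gamma_eq_integral hs,
    show α + 2*(k:ℝ) + 1 = (α+1) + (2*k : ℕ) by push_cast; ring,
    gamma_shift (2*k) (by linarith), asc_dup,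
    show (α+1)/2 = (α+1)/2 from rfl,
    show (α+1+1)/2 = (α+2)/2 by ring_nf]
  have hk : (Nat.factorial k : ℝ) ≠ 0 := by positivity
  field_simp
  rw [show (4:ℝ) = 2^2 by norm_num, ← pow_mul]
  ring

lemma term_intble (α : ℝ) (hα : -1 < α) (k : ℕ) (c : ℝ) :
    IntegrableOn (fun x =>
      (x ^ α / Real.Gamma (α+1)
        * (c / ((Nat.factorial k) * (ascPochhammer ℝ k).eval ((α+2)/2)) * (x^2/2)^k))
        * Real.exp (-x)) (Set.Ioi (0:ℝ)) := by
  have hk2 : (0:ℝ) ≤ 2*(k:ℝ) := by positivity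
  have hs : (0:ℝ) < α + 2*(k:ℝ) + 1 := by linarith
  exact IntegrableOn.congr_fun ((Real.GammaIntegral_convergent hs).const_mul _)
    (fun x hx => (term_ptwise α hα k c x hx).symm) measurableSet_Ioi
open Polynomial in
/-- for a polynomial `f` and `α > −1`, with
`Ψ_{α,f}(x) = (x^α/Γ(α+1)) Σₖ f⁽ᵏ⁾(0)/(k!((α+2)/2)ₖ) (x²/2)ᵏ`,
one has `∫₀^∞ Ψ_{α,f}(x) e^{−x} dx = Σₖ ((α+1)/2)ₖ 2ᵏ/k! f⁽ᵏ⁾(0)`. -/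
theorem two_orthogonal_laguerre_functional (f : Polynomial ℝ) (α : ℝ) (hα : -1 < α) :
    ∫ x in Set.Ioi (0:ℝ),
        (x ^ α / Real.Gamma (α+1)
          * ∑ k ∈ Finset.range (f.natDegree + 1),
              (derivative^[k] f).eval 0
                / ((Nat.factorial k) * (ascPochhammer ℝ k).eval ((α+2)/2))
                * (x^2/2)^k) * Real.exp (-x)
      = ∑ k ∈ Finset.range (f.natDegree + 1),
          (ascPochhammer ℝ k).eval ((α+1)/2) * 2^k / (Nat.factorial k)
            * (derivative^[k] f).eval 0 := by
  simp_rw [Finset.mul_sum, Finset.sum_mul]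
  rw [integral_finset_sum _ (fun k _ => term_intble α hα k _)]
  exact Finset.sum_congr rfl fun k _ => term_aux α hα k _
end

section
/- In formal power series, for any α: [d/dt]((1−t)^{−(α+1)}·exp(x·(t²−2t)/(2(1−t)²))) = [(α+1)/(1−t) + x·(−1)/(1−t)³]·(1−t)^{−(α+1)}·exp(x·(t²−2t)/(2(1−t)²)); equivalently, G(x,t) = (1−t)^{−α−1}exp(x(t²−2t)/(2(1−t)²)) satisfies −(1−t)³·∂G/∂t + (α+1)(1−t)²·G = x·G. -/
/-- analytic form: `G(x,t) = (1−t)^(−(α+1)) exp(x(t²−2t)/(2(1−t)²))`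
satisfies `∂G/∂t = [(α+1)/(1−t) − x/(1−t)³] G`, equivalently
`−(1−t)³ ∂G/∂t + (α+1)(1−t)² G = x G`. -/
theorem two_orthogonal_laguerre_functional_equation (α x t : ℝ) (ht : t < 1) :
    deriv (fun u : ℝ =>
        (1-u) ^ (-(α+1)) * Real.exp (x * (u^2 - 2*u) / (2*(1-u)^2))) t
      = ((α+1)/(1-t) + x * (-1)/(1-t)^3) *
          ((1-t) ^ (-(α+1)) * Real.exp (x * (t^2 - 2*t) / (2*(1-t)^2))) ∧
    -(1-t)^3 * deriv (fun u : ℝ =>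
        (1-u) ^ (-(α+1)) * Real.exp (x * (u^2 - 2*u) / (2*(1-u)^2))) t
      + (α+1) * (1-t)^2 *
          ((1-t) ^ (-(α+1)) * Real.exp (x * (t^2 - 2*t) / (2*(1-t)^2)))
      = x * ((1-t) ^ (-(α+1)) * Real.exp (x * (t^2 - 2*t) / (2*(1-t)^2))) := by
  have ht' : (0:ℝ) < 1 - t := by linarith
  have hne : (1:ℝ) - t ≠ 0 := ne_of_gt ht'
  have hlin : HasDerivAt (fun u : ℝ => 1 - u) (-1) t := by
    simpa using (hasDerivAt_id t).const_sub 1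
  have h1 : HasDerivAt (fun u : ℝ => (1-u) ^ (-(α+1)))
      (-1 * (-(α+1)) * (1-t) ^ (-(α+1) - 1)) t :=
    hlin.rpow_const (Or.inl hne)
  have hnum : HasDerivAt (fun u : ℝ => x * (u^2 - 2*u)) (x * (2*t - 2)) t := by
    have : HasDerivAt (fun u : ℝ => u^2 - 2*u) (2*t - 2) t := by
      simpa using ((hasDerivAt_pow 2 t).fun_sub ((hasDerivAt_id t).const_mul 2))
    simpa [mul_comm, mul_left_comm, mul_assoc] using this.const_mul x
  have hden : HasDerivAt (fun u : ℝ => 2 * (1-u)^2) (2 * (2 * (1-t) * (-1))) t := by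
    have := (hlin.pow 2).const_mul 2
    simpa [mul_comm, mul_left_comm, mul_assoc] using this
  have hden_ne : 2 * (1-t)^2 ≠ 0 := by positivity
  have h2 : HasDerivAt (fun u : ℝ => x * (u^2 - 2*u) / (2*(1-u)^2))
      ((x * (2*t - 2) * (2*(1-t)^2) - x * (t^2 - 2*t) * (2 * (2 * (1-t) * (-1)))) /
        (2*(1-t)^2)^2) t := hnum.div hden hden_ne
  have h3 : HasDerivAt (fun u : ℝ => Real.exp (x * (u^2 - 2*u) / (2*(1-u)^2)))
      (Real.exp (x * (t^2 - 2*t) / (2*(1-t)^2)) *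
        ((x * (2*t - 2) * (2*(1-t)^2) - x * (t^2 - 2*t) * (2 * (2 * (1-t) * (-1)))) /
          (2*(1-t)^2)^2)) t := h2.exp
  have h4 := h1.fun_mul h3
  have hd := h4.deriv
  refine ⟨?_, ?_⟩
  · rw [hd]
    have hsub : (1-t) ^ (-(α+1) - 1) = (1-t) ^ (-(α+1)) / (1-t) :=
      Real.rpow_sub_one hne _
    rw [hsub]
    field_simp
    ring
  · rw [hd]
    have hsub : (1-t) ^ (-(α+1) - 1) = (1-t) ^ (-(α+1)) / (1-t) :=
      Real.rpow_sub_one hne _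
    rw [hsub]
    field_simp
    ring
end
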